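/- Define A(τ) = (1-sτ)^ε · (1 - τ(1+ε(1-s)))/(1+ε) for ε > 0, s ∈ (0,1]. Then A''(τ) > 0 if and only if τ < (2-s)/(s(1+(1-s)ε)). Moreover, the revenue-efficiency bound 1/(s(1+ε)) is strictly less than (2-s)/(s(1+(1-s)ε)), so A''(τ) > 0 at every revenue-efficient tax rate τ ≤ 1/(s(1+ε)). -/

import Mathlib

private lemma aux_lin (s τ : ℝ) : HasDerivAt (fun t : ℝ => 1 - s * t) (-s) τ := by
  simpa using ((hasDerivAt_id τ).const_mul s).const_sub (1:ℝ)

private lemma aux_pow (s τ p : ℝ) (hu : 0 < 1 - s * τ) :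
    HasDerivAt (fun t : ℝ => (1 - s * t) ^ p) (p * (1 - s * τ) ^ (p - 1) * (-s)) τ := by
  have h := (Real.hasDerivAt_rpow_const (x := 1 - s * τ) (p := p) (Or.inl hu.ne')).comp τ
    (aux_lin s τ)
  simpa [Function.comp_def, mul_comm, mul_assoc, mul_left_comm] using h

private lemma aux_lin2 (k τ : ℝ) : HasDerivAt (fun t : ℝ => 1 - t * k) (-k) τ := by
  simpa using ((hasDerivAt_id τ).mul_const k).const_sub (1:ℝ)

/-- first derivative -/
private lemma aux_dA (ε s : ℝ) (τ : ℝ) (hu : 0 < 1 - s * τ) :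
    HasDerivAt (fun t : ℝ => (1 - s * t) ^ ε * (1 - t * (1 + ε * (1 - s))) / (1 + ε))
      ((ε * (1 - s * τ) ^ (ε - 1) * (-s) * (1 - τ * (1 + ε * (1 - s)))
        + (1 - s * τ) ^ ε * (-(1 + ε * (1 - s)))) / (1 + ε)) τ := by
  exact ((aux_pow s τ ε hu).mul (aux_lin2 (1 + ε * (1 - s)) τ)).div_const (1 + ε)

/-- second derivative -/
private lemma aux_dg (ε s : ℝ) (τ : ℝ) (hu : 0 < 1 - s * τ) :
    HasDerivAt (fun t : ℝ =>
      (ε * (1 - s * t) ^ (ε - 1) * (-s) * (1 - t * (1 + ε * (1 - s)))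
        + (1 - s * t) ^ ε * (-(1 + ε * (1 - s)))) / (1 + ε))
      ((ε * ((ε - 1) * (1 - s * τ) ^ (ε - 1 - 1) * (-s)) * (-s) * (1 - τ * (1 + ε * (1 - s)))
        + ε * (1 - s * τ) ^ (ε - 1) * (-s) * (-(1 + ε * (1 - s)))
        + ε * (1 - s * τ) ^ (ε - 1) * (-s) * (-(1 + ε * (1 - s)))) / (1 + ε)) τ := by
  have h1 : HasDerivAt (fun t : ℝ => ε * (1 - s * t) ^ (ε - 1) * (-s))
      (ε * ((ε - 1) * (1 - s * τ) ^ (ε - 1 - 1) * (-s)) * (-s)) τ :=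
    (((aux_pow s τ (ε - 1) hu)).const_mul ε).mul_const (-s)
  have h2 := h1.mul (aux_lin2 (1 + ε * (1 - s)) τ)
  have h3 : HasDerivAt (fun t : ℝ => (1 - s * t) ^ ε * (-(1 + ε * (1 - s))))
      (ε * (1 - s * τ) ^ (ε - 1) * (-s) * (-(1 + ε * (1 - s)))) τ :=
    (aux_pow s τ ε hu).mul_const _
  have h4 := (h2.add h3).div_const (1 + ε)
  exact h4.congr_deriv (by ring)

private lemma aux_deriv2 (ε s : ℝ) (hε : 0 < ε) (A : ℝ → ℝ)
    (hA : ∀ τ, A τ = (1 - s * τ) ^ ε * (1 - τ * (1 + ε * (1 - s))) / (1 + ε))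
    (τ : ℝ) (hu : s * τ < 1) (hs0 : 0 < s) :
    deriv (deriv A) τ =
      s * ε * (1 - s * τ) ^ (ε - 1 - 1) * ((2 - s) - s * (1 + ε * (1 - s)) * τ) := by
  have hu' : 0 < 1 - s * τ := by linarith
  have hAe : A = fun t : ℝ => (1 - s * t) ^ ε * (1 - t * (1 + ε * (1 - s))) / (1 + ε) :=
    funext hA
  have hopen : IsOpen {t : ℝ | s * t < 1} :=
    isOpen_lt (continuous_const.mul continuous_id) continuous_const
  have hev : deriv A =ᶠ[nhds τ] fun t : ℝ =>
      (ε * (1 - s * t) ^ (ε - 1) * (-s) * (1 - t * (1 + ε * (1 - s)))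
        + (1 - s * t) ^ ε * (-(1 + ε * (1 - s)))) / (1 + ε) := by
    filter_upwards [hopen.mem_nhds hu] with t ht
    rw [hAe]
    have ht' : s * t < 1 := ht
    exact (aux_dA ε s t (by linarith)).deriv
  rw [hev.deriv_eq, (aux_dg ε s τ hu').deriv]
  have hpow : (1 - s * τ) ^ (ε - 1) = (1 - s * τ) ^ (ε - 1 - 1) * (1 - s * τ) := by
    rw [← Real.rpow_add_one hu'.ne']
    norm_num
  have hpow2 : (1 - s * τ) ^ ε = (1 - s * τ) ^ (ε - 1) * (1 - s * τ) := by
    rw [← Real.rpow_add_one hu'.ne']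
    norm_num
  rw [hpow]
  have hε1 : (1 : ℝ) + ε ≠ 0 := by positivity
  field_simp
  ring

/-- For `A(τ) = (1-sτ)^ε·(1-τ(1+ε(1-s)))/(1+ε)` with `ε > 0`,
`s ∈ (0,1]`: on the domain `0 ≤ τ`, `sτ < 1`, `A''(τ) > 0` iff
`τ < (2-s)/(s(1+(1-s)ε))`; moreover `1/(s(1+ε)) < (2-s)/(s(1+(1-s)ε))`, so `A'' > 0`
at every revenue-efficient tax rate `τ ≤ 1/(s(1+ε))`. -/
theorem stmt15 (ε s : ℝ) (hε : 0 < ε) (hs0 : 0 < s) (hs1 : s ≤ 1)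
    (A : ℝ → ℝ)
    (hA : ∀ τ, A τ = (1 - s * τ) ^ ε * (1 - τ * (1 + ε * (1 - s))) / (1 + ε)) :
    (∀ τ : ℝ, 0 ≤ τ → s * τ < 1 →
      (0 < deriv (deriv A) τ ↔ τ < (2 - s) / (s * (1 + (1 - s) * ε)))) ∧
    1 / (s * (1 + ε)) < (2 - s) / (s * (1 + (1 - s) * ε)) ∧
    (∀ τ : ℝ, 0 ≤ τ → τ ≤ 1 / (s * (1 + ε)) → 0 < deriv (deriv A) τ) := by
  have hk : 0 < s * (1 + (1 - s) * ε) := by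
    nlinarith [mul_nonneg hs0.le (mul_nonneg (sub_nonneg.mpr hs1) hε.le)]
  have main : ∀ τ : ℝ, 0 ≤ τ → s * τ < 1 →
      (0 < deriv (deriv A) τ ↔ τ < (2 - s) / (s * (1 + (1 - s) * ε))) := by
    intro τ hτ0 hτ1
    have hu' : 0 < 1 - s * τ := by linarith
    rw [aux_deriv2 ε s hε A hA τ hτ1 hs0, lt_div_iff₀ hk]
    have hpos : 0 < s * ε * (1 - s * τ) ^ (ε - 1 - 1) := by positivity
    constructor
    · intro h
      have h2 : 0 < (2 - s) - s * (1 + ε * (1 - s)) * τ := by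
        by_contra h3
        push_neg at h3
        nlinarith
      nlinarith
    · intro h
      have h2 : 0 < (2 - s) - s * (1 + ε * (1 - s)) * τ := by nlinarith
      positivity
  refine ⟨main, ?_, ?_⟩
  · rw [div_lt_div_iff₀ (by positivity) hk]
    nlinarith
  · intro τ hτ0 hτle
    have hb : 0 < s * (1 + ε) := by positivity
    have h2 : τ * (s * (1 + ε)) ≤ 1 := (le_div_iff₀ hb).mp hτle
    have hτ1 : s * τ < 1 := by nlinarith
    refine (main τ hτ0 hτ1).mpr ?_
    calc τ ≤ 1 / (s * (1 + ε)) := hτle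
      _ < (2 - s) / (s * (1 + (1 - s) * ε)) := by
          rw [div_lt_div_iff₀ hb hk]; nlinarith
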